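/- Let E be a Hilbert space, X ⊂ E, and suppose that for every x ∈ X there is an n-dimensional affine subspace A_x through x with d_H(X ∩ B_1(x), A_x ∩ B_1(x)) < δ, where δ is sufficiently small (depending on n). Then for any two points p, q ∈ X with |p − q| < 1: (a) dist(q, A_p) < δ, and (b) the angle between A_p and A_q satisfies sin ∠(A_p, A_q) ≤ 4δ/(1 − 4δ), hence ∠(A_p, A_q) < 5δ for δ small enough. -/

import Mathlib

open Metric

/-- `sin` of the (maximal principal) angle between two subspaces `V, W` of a Hilbert space:
the supremum over unit vectors `v ∈ V` of the distance from `v` to `W`. -/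
noncomputable def sinAngle {E : Type*} [NormedAddCommGroup E] [InnerProductSpace ℝ E]
    (V W : Submodule ℝ E) : ℝ :=
  sSup ((fun v => Metric.infDist v (W : Set E)) '' {v : E | v ∈ V ∧ ‖v‖ = 1})

/-- **Nearby approximating affine planes are almost parallel.**
For every `n` there is `δ₀ > 0` such that: if `X` is a subset of a Hilbert space `E` and for
every `x ∈ X` there is an `n`-dimensional affine subspace `A x` through `x` with
`d_H(X ∩ B₁(x), A x ∩ B₁(x)) < δ` (`0 < δ < δ₀`), then for all `p, q ∈ X` with `|p − q| < 1`:
(a) `dist(q, A p) < δ`, and (b) `sin ∠(A p, A q) ≤ 4δ/(1 − 4δ)`, hence `∠(A p, A q) < 5δ`. -/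
theorem stmt8 (n : ℕ) : ∃ δ₀ : ℝ, 0 < δ₀ ∧
    ∀ (E : Type) [NormedAddCommGroup E] [InnerProductSpace ℝ E]
      (X : Set E) (A : E → AffineSubspace ℝ E) (δ : ℝ), 0 < δ → δ < δ₀ →
      (∀ x ∈ X, x ∈ A x ∧ Module.finrank ℝ (A x).direction = n ∧
        Metric.hausdorffDist (X ∩ Metric.closedBall x 1)
          ((A x : Set E) ∩ Metric.closedBall x 1) < δ) →
      ∀ p ∈ X, ∀ q ∈ X, dist p q < 1 →
        Metric.infDist q (A p : Set E) < δ ∧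
        sinAngle (A p).direction (A q).direction ≤ 4 * δ / (1 - 4 * δ) ∧
        Real.arcsin (sinAngle (A p).direction (A q).direction) < 5 * δ := by
  refine ⟨1/100, by norm_num, ?_⟩
  intro E _ _ X A δ hδ hδ0 hA p hp q hq hpq
  obtain ⟨hpA, -, hDp⟩ := hA p hp
  obtain ⟨hqA, -, hDq⟩ := hA q hq
  set Sp : Set E := X ∩ closedBall p 1 with hSpdef
  set Tp : Set E := (A p : Set E) ∩ closedBall p 1 with hTpdef
  set Sq : Set E := X ∩ closedBall q 1 with hSqdef
  set Tq : Set E := (A q : Set E) ∩ closedBall q 1 with hTqdef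
  have hpSp : p ∈ Sp := ⟨hp, mem_closedBall_self (by norm_num)⟩
  have hpTp : p ∈ Tp := ⟨hpA, mem_closedBall_self (by norm_num)⟩
  have hqSq : q ∈ Sq := ⟨hq, mem_closedBall_self (by norm_num)⟩
  have hqTq : q ∈ Tq := ⟨hqA, mem_closedBall_self (by norm_num)⟩
  have hbSp : Bornology.IsBounded Sp := isBounded_closedBall.subset Set.inter_subset_right
  have hbTp : Bornology.IsBounded Tp := isBounded_closedBall.subset Set.inter_subset_right
  have hbSq : Bornology.IsBounded Sq := isBounded_closedBall.subset Set.inter_subset_right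
  have hbTq : Bornology.IsBounded Tq := isBounded_closedBall.subset Set.inter_subset_right
  have hfinp : EMetric.hausdorffEdist Sp Tp ≠ ⊤ :=
    hausdorffEdist_ne_top_of_nonempty_of_bounded ⟨p, hpSp⟩ ⟨p, hpTp⟩ hbSp hbTp
  have hfinq : EMetric.hausdorffEdist Sq Tq ≠ ⊤ :=
    hausdorffEdist_ne_top_of_nonempty_of_bounded ⟨q, hqSq⟩ ⟨q, hqTq⟩ hbSq hbTq
  have hqSp : q ∈ Sp := ⟨hq, by
    rw [mem_closedBall, dist_comm]; exact hpq.le⟩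
  -- part (a)
  have h1 : infDist q Tp < δ :=
    (infDist_le_hausdorffDist_of_mem hqSp hfinp).trans_lt hDp
  have parta : infDist q (A p : Set E) < δ :=
    (infDist_le_infDist_of_subset Set.inter_subset_left ⟨p, hpTp⟩).trans_lt h1
  -- a point q'' of A p near q
  obtain ⟨q'', hq''Tp, hqq''⟩ := (infDist_lt_iff ⟨p, hpTp⟩).mp h1
  -- key chaining lemma: points of A p in B₁(p), not too far from q, are 2δ-close to A q
  have key : ∀ a : E, a ∈ A p → dist a p ≤ 1 → dist a q ≤ 1 - δ →
      ∃ b ∈ A q, dist a b < 2 * δ := by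
    intro a haA hap haq
    have haTp : a ∈ Tp := ⟨haA, mem_closedBall.mpr hap⟩
    have h2 : infDist a Sp < δ := by
      have := infDist_le_hausdorffDist_of_mem haTp
        (by rw [EMetric.hausdorffEdist] at hfinp; rwa [Metric.hausdorffEDist_comm] at hfinp)
      rw [hausdorffDist_comm] at this
      exact this.trans_lt hDp
    obtain ⟨x, hxSp, hax⟩ := (infDist_lt_iff ⟨p, hpSp⟩).mp h2
    have hxSq : x ∈ Sq := ⟨hxSp.1, mem_closedBall.mpr (by
      calc dist x q ≤ dist x a + dist a q := dist_triangle x a q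
        _ ≤ δ + (1 - δ) := by rw [dist_comm x a]; linarith
        _ = 1 := by ring)⟩
    have h3 : infDist x Tq < δ :=
      (infDist_le_hausdorffDist_of_mem hxSq hfinq).trans_lt hDq
    obtain ⟨b, hbTq, hxb⟩ := (infDist_lt_iff ⟨q, hqTq⟩).mp h3
    refine ⟨b, hbTq.1, ?_⟩
    calc dist a b ≤ dist a x + dist x b := dist_triangle a x b
      _ < δ + δ := by linarith
      _ = 2 * δ := by ring
  -- the sin-angle bound
  have hz : (0:ℝ) < 1 - 4 * δ := by linarith
  have hbound : sinAngle (A p).direction (A q).direction ≤ 4 * δ / (1 - 4 * δ) := by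
    apply Real.sSup_le _ (by positivity)
    rintro r ⟨v, ⟨hvV, hv1⟩, rfl⟩
    set t : ℝ := 1/2 - 2*δ with ht
    have htpos : 0 < t := by rw [ht]; linarith
    have hdir : q'' - p ∈ (A p).direction := by
      simpa using AffineSubspace.vsub_mem_direction hq''Tp.1 hpA
    set m : E := (1/2 : ℝ) • (q'' - p) + p with hm
    have hmA : m ∈ A p := by
      simpa [hm] using
        AffineSubspace.vadd_mem_of_mem_direction (Submodule.smul_mem _ (1/2 : ℝ) hdir) hpA
    have hq''p : ‖q'' - p‖ ≤ δ + 1 := by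
      calc ‖q'' - p‖ = dist q'' p := (dist_eq_norm _ _).symm
        _ ≤ dist q'' q + dist q p := dist_triangle _ _ _
        _ ≤ δ + 1 := by
            rw [dist_comm q'' q, dist_comm q p]; linarith
    have hmp : ‖m - p‖ ≤ (1 + δ) / 2 := by
      have h4 : m - p = (1/2 : ℝ) • (q'' - p) := by rw [hm]; abel
      rw [h4, norm_smul, show ‖(1/2 : ℝ)‖ = 1/2 by norm_num]
      linarith
    have hmq : ‖m - q‖ ≤ (1 + δ) / 2 := by
      have h4 : m - q = (1/2 : ℝ) • (q'' - q) + (1/2 : ℝ) • (p - q) := by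
        rw [hm]; module
      have h5 : ‖q'' - q‖ ≤ δ := by
        rw [← dist_eq_norm, dist_comm]; exact hqq''.le
      have h6 : ‖p - q‖ ≤ 1 := by rw [← dist_eq_norm]; exact hpq.le
      calc ‖m - q‖ ≤ ‖(1/2 : ℝ) • (q'' - q)‖ + ‖(1/2 : ℝ) • (p - q)‖ := by
            rw [h4]; exact norm_add_le _ _
        _ = (1/2) * ‖q'' - q‖ + (1/2) * ‖p - q‖ := by
            rw [norm_smul, norm_smul, show ‖(1/2 : ℝ)‖ = 1/2 by norm_num]
        _ ≤ (1 + δ) / 2 := by linarith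
    -- the two probe points
    have hmem : ∀ s : ℝ, |s| = t → (s • v + m ∈ A p) ∧ dist (s • v + m) p ≤ 1 ∧
        dist (s • v + m) q ≤ 1 - δ := by
      intro s hs
      have hsv : ‖s • v‖ = t := by rw [norm_smul, hv1, Real.norm_eq_abs, hs, mul_one]
      refine ⟨AffineSubspace.vadd_mem_of_mem_direction (Submodule.smul_mem _ s hvV) hmA, ?_, ?_⟩
      · rw [dist_eq_norm]
        calc ‖s • v + m - p‖ ≤ ‖s • v‖ + ‖m - p‖ := by
              have : s • v + m - p = s • v + (m - p) := by abel
              rw [this]; exact norm_add_le _ _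
          _ ≤ t + (1 + δ) / 2 := by rw [hsv]; linarith
          _ ≤ 1 := by rw [ht]; linarith
      · rw [dist_eq_norm]
        calc ‖s • v + m - q‖ ≤ ‖s • v‖ + ‖m - q‖ := by
              have : s • v + m - q = s • v + (m - q) := by abel
              rw [this]; exact norm_add_le _ _
          _ ≤ t + (1 + δ) / 2 := by rw [hsv]; linarith
          _ ≤ 1 - δ := by rw [ht]; linarith
    obtain ⟨hPA, hPp, hPq⟩ := hmem t (abs_of_pos htpos)
    obtain ⟨hMA, hMp, hMq⟩ := hmem (-t) (by rw [abs_neg, abs_of_pos htpos])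
    obtain ⟨bP, hbPA, habP⟩ := key _ hPA hPp hPq
    obtain ⟨bM, hbMA, habM⟩ := key _ hMA hMp hMq
    set w : E := ((2 * t)⁻¹) • (bP - bM) with hw
    have hwW : w ∈ (A q).direction :=
      Submodule.smul_mem _ _ (by simpa using AffineSubspace.vsub_mem_direction hbPA hbMA)
    have h2t : (2 * t) = 1 - 4 * δ := by rw [ht]; ring
    have h2tpos : (0:ℝ) < 2 * t := by linarith
    have hvw : ‖v - w‖ ≤ 4 * δ / (1 - 4 * δ) := by
      have hveq : v = ((2 * t)⁻¹) • ((t • v + m) - ((-t) • v + m)) := by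
        have : (t • v + m) - ((-t) • v + m) = (2 * t) • v := by module
        rw [this, smul_smul, inv_mul_cancel₀ (by positivity), one_smul]
      have hdiff : v - w = ((2 * t)⁻¹) •
          (((t • v + m) - bP) - (((-t) • v + m) - bM)) := by
        rw [hw]; nth_rewrite 1 [hveq]; rw [← smul_sub]; congr 1; abel
      rw [hdiff, norm_smul]
      have h7 : ‖((t • v + m) - bP) - (((-t) • v + m) - bM)‖ ≤ 4 * δ := by
        calc ‖((t • v + m) - bP) - (((-t) • v + m) - bM)‖
            ≤ ‖(t • v + m) - bP‖ + ‖((-t) • v + m) - bM‖ := norm_sub_le _ _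
          _ ≤ 4 * δ := by
              rw [← dist_eq_norm, ← dist_eq_norm]; linarith
      have h8 : ‖(2 * t)⁻¹‖ = (1 - 4 * δ)⁻¹ := by
        rw [Real.norm_eq_abs, abs_of_pos (by positivity), h2t]
      rw [h8]
      rw [div_eq_inv_mul]
      exact mul_le_mul_of_nonneg_left h7 (by positivity)
    calc infDist v ((A q).direction : Set E) ≤ dist v w := infDist_le_dist_of_mem hwW
      _ = ‖v - w‖ := dist_eq_norm _ _
      _ ≤ 4 * δ / (1 - 4 * δ) := hvw
  -- arcsin bound
  refine ⟨parta, hbound, ?_⟩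
  have hzlt : 4 * δ / (1 - 4 * δ) < 1 := by
    rw [div_lt_one hz]; linarith
  have hznn : (0:ℝ) ≤ 4 * δ / (1 - 4 * δ) := by positivity
  have harc1 : Real.arcsin (sinAngle (A p).direction (A q).direction) ≤
      Real.arcsin (4 * δ / (1 - 4 * δ)) := Real.monotone_arcsin hbound
  have harc2 : Real.arcsin (4 * δ / (1 - 4 * δ)) < 5 * δ := by
    by_contra hcon
    push_neg at hcon
    have h5δ : (0:ℝ) < 5 * δ := by linarith
    have h5δ1 : (5:ℝ) * δ ≤ 1 := by linarith
    have hsin5 : 5 * δ - (5 * δ) ^ 3 / 4 < Real.sin (5 * δ) :=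
      by have := Real.sin_gt_sub_cube h5δ; nlinarith [pow_pos h5δ 3]
    have hsinmono : Real.sin (5 * δ) ≤ Real.sin (Real.arcsin (4 * δ / (1 - 4 * δ))) := by
      apply Real.strictMonoOn_sin.monotoneOn
      · constructor
        · linarith [Real.pi_gt_three]
        · linarith [Real.pi_gt_three]
      · exact Real.arcsin_mem_Icc _
      · exact hcon
    rw [Real.sin_arcsin (by linarith) hzlt.le] at hsinmono
    -- so 5δ - (5δ)³/4 < 4δ/(1-4δ), contradiction for δ < 1/100
    have hlt : 5 * δ - (5 * δ) ^ 3 / 4 < 4 * δ / (1 - 4 * δ) := lt_of_lt_of_le hsin5 hsinmono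
    rw [lt_div_iff₀ hz] at hlt
    nlinarith [sq_nonneg δ, hδ.le]
  exact lt_of_le_of_lt harc1 harc2
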